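/- Monotonicity pattern of Ξ₁ (step in the proof of Lemma 2). Let λ > 0 and c > 0, define Ξ₁(G) := 2λ · ∫_G^∞ e^{−λg}/ln(1 + c·g) dg − e^{−λG}/ln(1 + c·G) for G > 0, and let x† be the unique zero in (0, ∞) of x ↦ c − λ·(1 + c·x)·ln(1 + c·x). Then Ξ₁ is strictly increasing on (0, x†] and strictly decreasing on [x†, ∞). -/

import Mathlib

open MeasureTheory Set

section aux

variable {lam c : ℝ}

lemma xi_log_pos (hc : 0 < c) {x : ℝ} (hx : 0 < x) : 0 < Real.log (1 + c * x) :=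
  Real.log_pos (by nlinarith)

lemma xi_meas : Measurable (fun g : ℝ => Real.exp (-lam * g) / Real.log (1 + c * g)) :=
  (Real.measurable_exp.comp (measurable_id.const_mul (-lam))).div
    (Real.measurable_log.comp ((measurable_id.const_mul c).const_add 1))

lemma xi_contAt (hc : 0 < c) {x : ℝ} (hx : 0 < x) :
    ContinuousAt (fun g : ℝ => Real.exp (-lam * g) / Real.log (1 + c * g)) x := by
  apply ContinuousAt.div
  · fun_prop
  · exact (Real.continuousAt_log (by nlinarith)).comp (by fun_prop)
  · exact (xi_log_pos hc hx).ne'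

lemma xi_integrable (hlam : 0 < lam) (hc : 0 < c) {a : ℝ} (ha : 0 < a) :
    IntegrableOn (fun g : ℝ => Real.exp (-lam * g) / Real.log (1 + c * g)) (Ioi a) := by
  have hL : 0 < Real.log (1 + c * a) := xi_log_pos hc ha
  refine Integrable.mono' ((exp_neg_integrableOn_Ioi a hlam).div_const (Real.log (1 + c * a)))
    xi_meas.aestronglyMeasurable ?_
  rw [ae_restrict_iff' measurableSet_Ioi]
  refine Filter.Eventually.of_forall fun x hx => ?_
  have hx0 : a < x := hx
  have hLx : Real.log (1 + c * a) ≤ Real.log (1 + c * x) := by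
    apply Real.log_le_log (by nlinarith); nlinarith
  rw [Real.norm_eq_abs, abs_div, abs_of_pos (Real.exp_pos _),
    abs_of_pos (lt_of_lt_of_le hL hLx)]
  gcongr

lemma xi_split (hlam : 0 < lam) (hc : 0 < c) {a b : ℝ} (ha : 0 < a) (hab : a ≤ b) :
    (∫ g in Ioi a, Real.exp (-lam * g) / Real.log (1 + c * g)) =
      (∫ g in Ioc a b, Real.exp (-lam * g) / Real.log (1 + c * g)) +
      ∫ g in Ioi b, Real.exp (-lam * g) / Real.log (1 + c * g) := by
  rw [← setIntegral_union (Ioc_disjoint_Ioi le_rfl) measurableSet_Ioi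
      ((xi_integrable hlam hc ha).mono_set Ioc_subset_Ioi_self)
      (xi_integrable hlam hc (lt_of_lt_of_le ha hab)),
    Ioc_union_Ioi_eq_Ioi hab]

lemma xi_F_deriv (hlam : 0 < lam) (hc : 0 < c) {x : ℝ} (hx : 0 < x) :
    HasDerivAt (fun G : ℝ => ∫ g in Ioi G, Real.exp (-lam * g) / Real.log (1 + c * g))
      (-(Real.exp (-lam * x) / Real.log (1 + c * x))) x := by
  set f : ℝ → ℝ := fun g => Real.exp (-lam * g) / Real.log (1 + c * g) with hf
  set F : ℝ → ℝ := fun G => ∫ g in Ioi G, f g with hF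
  have heq : EqOn F (fun y => F x - ∫ t in x..y, f t) (Ioi 0) := by
    intro y hy
    rcases le_total x y with h | h
    · simp only
      rw [intervalIntegral.integral_of_le h, hF]
      simp only
      rw [xi_split hlam hc hx h]; ring
    · simp only
      rw [intervalIntegral.integral_symm, intervalIntegral.integral_of_le h, hF]
      simp only
      rw [xi_split hlam hc hy h]; ring
  have hii : IntervalIntegrable f volume x x := by
    rw [intervalIntegrable_iff]; simp
  have hmeas : StronglyMeasurableAtFilter f (nhds x) volume :=
    ⟨univ, Filter.univ_mem, xi_meas.aestronglyMeasurable.restrict⟩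
  have hd : HasDerivAt (fun y => F x - ∫ t in x..y, f t) (-(f x)) x := by
    have h1 := intervalIntegral.integral_hasDerivAt_right hii hmeas (xi_contAt hc hx)
    simpa using h1.const_sub (F x)
  exact hd.congr_of_eventuallyEq
    ((Filter.eventuallyEq_of_mem (Ioi_mem_nhds hx) heq))

lemma xi2_hasDeriv (hlam : 0 < lam) (hc : 0 < c) {x : ℝ} (hx : 0 < x) :
    HasDerivAt (fun y : ℝ => c - lam * (1 + c * y) * Real.log (1 + c * y))
      (-(lam * c * (Real.log (1 + c * x) + 1))) x := by
  have hne : (1 + c * x) ≠ 0 := by nlinarith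
  have h1 : HasDerivAt (fun y : ℝ => 1 + c * y) c x := by
    simpa using ((hasDerivAt_id x).const_mul c).const_add 1
  have h2 : HasDerivAt (fun y : ℝ => Real.log (1 + c * y)) (c / (1 + c * x)) x :=
    h1.log hne
  have h3 := ((h1.mul h2).const_mul lam).const_sub c
  simp only [Pi.mul_apply, ← mul_assoc] at h3
  refine h3.congr_deriv ?_
  have h4 : (1 + c * x) * (c / (1 + c * x)) = c := by field_simp
  rw [mul_assoc lam, h4]
  ring

lemma xi2_anti (hlam : 0 < lam) (hc : 0 < c) :
    StrictAntiOn (fun y : ℝ => c - lam * (1 + c * y) * Real.log (1 + c * y)) (Ici 0) := by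
  apply strictAntiOn_of_deriv_neg (convex_Ici 0)
  · apply ContinuousOn.sub continuousOn_const
    apply ContinuousOn.mul (by fun_prop)
    apply Real.continuousOn_log.comp (by fun_prop)
    intro y hy
    have hy' : (0:ℝ) ≤ y := hy
    simp only [mem_compl_iff, mem_singleton_iff]
    nlinarith
  · intro y hy
    rw [interior_Ici] at hy
    rw [(xi2_hasDeriv hlam hc hy).deriv]
    have hL : 0 < Real.log (1 + c * y) := xi_log_pos hc hy
    nlinarith [mul_pos (mul_pos hlam hc) (by linarith : (0:ℝ) < Real.log (1 + c * y) + 1)]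

lemma xi1_hasDeriv (hlam : 0 < lam) (hc : 0 < c) {x : ℝ} (hx : 0 < x) :
    HasDerivAt
      (fun G : ℝ => 2 * lam * (∫ g in Set.Ioi G, Real.exp (-lam * g) / Real.log (1 + c * g)) -
        Real.exp (-lam * G) / Real.log (1 + c * G))
      (Real.exp (-lam * x) * (c - lam * (1 + c * x) * Real.log (1 + c * x)) /
        ((1 + c * x) * (Real.log (1 + c * x)) ^ 2)) x := by
  have hu : (0:ℝ) < 1 + c * x := by nlinarith
  have hL : 0 < Real.log (1 + c * x) := xi_log_pos hc hx
  have hexp : HasDerivAt (fun g : ℝ => Real.exp (-lam * g)) (Real.exp (-lam * x) * (-lam)) x := by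
    simpa using ((hasDerivAt_id x).const_mul (-lam)).exp
  have hlog : HasDerivAt (fun g : ℝ => Real.log (1 + c * g)) (c / (1 + c * x)) x :=
    (by simpa using ((hasDerivAt_id x).const_mul c).const_add 1 : HasDerivAt (fun y : ℝ => 1 + c * y) c x).log hu.ne'
  have hfd := hexp.div hlog hL.ne'
  have hFd := (xi_F_deriv hlam hc hx).const_mul (2 * lam)
  have h := hFd.sub hfd
  refine h.congr_deriv ?_
  field_simp
  ring

end aux

theorem Xi1_monotonicity_pattern (lam c : ℝ) (hlam : 0 < lam) (hc : 0 < c)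
    (xd : ℝ) (hxd : 0 < xd)
    (hzero : c - lam * (1 + c * xd) * Real.log (1 + c * xd) = 0)
    (huniq : ∀ y : ℝ, 0 < y → c - lam * (1 + c * y) * Real.log (1 + c * y) = 0 → y = xd) :
    StrictMonoOn
      (fun G : ℝ => 2 * lam * (∫ g in Set.Ioi G, Real.exp (-lam * g) / Real.log (1 + c * g)) -
        Real.exp (-lam * G) / Real.log (1 + c * G))
      (Set.Ioc 0 xd) ∧
    StrictAntiOn
      (fun G : ℝ => 2 * lam * (∫ g in Set.Ioi G, Real.exp (-lam * g) / Real.log (1 + c * g)) -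
        Real.exp (-lam * G) / Real.log (1 + c * G))
      (Set.Ici xd) := by
  set Xi1 : ℝ → ℝ := fun G =>
    2 * lam * (∫ g in Set.Ioi G, Real.exp (-lam * g) / Real.log (1 + c * g)) -
      Real.exp (-lam * G) / Real.log (1 + c * G) with hXi1
  have hcont : ∀ x : ℝ, 0 < x → ContinuousAt Xi1 x := fun x hx =>
    (xi1_hasDeriv hlam hc hx).continuousAt
  constructor
  · apply strictMonoOn_of_deriv_pos (convex_Ioc 0 xd)
    · exact fun x hx => (hcont x hx.1).continuousWithinAt
    · intro x hx
      rw [interior_Ioc] at hx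
      obtain ⟨hx1, hx2⟩ := hx
      rw [(xi1_hasDeriv hlam hc hx1).deriv]
      have hxi2 : 0 < c - lam * (1 + c * x) * Real.log (1 + c * x) := by
        have := xi2_anti hlam hc (le_of_lt hx1) (le_of_lt hxd) hx2
        simp only at this
        linarith [hzero ▸ this]
      have hu : (0:ℝ) < 1 + c * x := by nlinarith
      have hL := xi_log_pos hc hx1
      positivity
  · apply strictAntiOn_of_deriv_neg (convex_Ici xd)
    · exact fun x hx => (hcont x (lt_of_lt_of_le hxd hx)).continuousWithinAt
    · intro x hx
      rw [interior_Ici] at hx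
      have hx0 : 0 < x := lt_trans hxd hx
      rw [(xi1_hasDeriv hlam hc hx0).deriv]
      have hxi2 : c - lam * (1 + c * x) * Real.log (1 + c * x) < 0 := by
        have := xi2_anti hlam hc (le_of_lt hxd) (le_of_lt hx0) hx
        simp only at this
        linarith [hzero ▸ this]
      have hu : (0:ℝ) < 1 + c * x := by nlinarith
      have hL := xi_log_pos hc hx0
      apply div_neg_of_neg_of_pos
      · exact mul_neg_of_pos_of_neg (Real.exp_pos _) hxi2
      · positivity
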